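/- arXiv:math/0610281 — 5 statements merged into one kernel-verified Lean document; each statement's English description precedes it below -/
import Mathlib

section
/- For every natural number n, ∑_{k=0}^{n} (-1)^k · C(n+k,k) · C(n,k) · (1 + 2k(H_{n+k} − H_k)) = (-1)^n (2n+1), as an identity of rational numbers. -/
open Finset

/-- Harmonic numbers `H_n = ∑_{j=1}^n 1/j`. -/
def H (n : ℕ) : ℚ := ∑ j ∈ Icc 1 n, (1 : ℚ) / j

open Polynomial in
noncomputable def auxLp (n : ℕ) : Polynomial ℚ :=
  ∑ k ∈ range (n+1), C ((-1:ℚ)^k * (Nat.choose (n+k) k) * (Nat.choose n k)) *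
    ∏ i ∈ (range (n+1)).erase k, (X + C (i:ℚ))

open Polynomial in
noncomputable def auxRp (n : ℕ) : Polynomial ℚ :=
  C ((-1:ℚ)^n) * ∏ i ∈ range n, (X - C ((i:ℚ)+1))

lemma aux_prod_factorial (n m : ℕ) :
    (∏ i ∈ range n, (m + 1 + i)) * m.factorial = (n + m).factorial := by
  induction n with
  | zero => simp
  | succ n ih =>
      rw [prod_range_succ, mul_right_comm, ih]
      have : n + 1 + m = (n + m) + 1 := by omega
      rw [this, Nat.factorial_succ]
      ring

lemma aux_prod_sub (m : ℕ) : ∏ i ∈ range m, (m - i) = m.factorial := by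
  induction m with
  | zero => simp
  | succ m ih =>
      rw [prod_range_succ' (fun i => m + 1 - i) m]
      simp only [Nat.succ_sub_succ]
      rw [ih, Nat.factorial_succ]
      simp [Nat.mul_comm]

lemma aux_H_diff (n k : ℕ) : H (n + k) - H k = ∑ j ∈ Icc 1 n, 1 / ((k:ℚ) + j) := by
  induction n with
  | zero => simp
  | succ n ih =>
      have h1 : H (n + 1 + k) = H (n + k) + 1 / ((n:ℚ) + k + 1) := by
        have : n + 1 + k = (n + k) + 1 := by omega
        rw [this]
        rw [H, H, Finset.sum_Icc_succ_top (by omega : 1 ≤ n + k + 1)]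
        push_cast; ring
      rw [h1, Finset.sum_Icc_succ_top (by omega : 1 ≤ n + 1)]
      rw [← ih]
      push_cast; ring

open Polynomial in
lemma aux_monic_prod (n k : ℕ) : (∏ i ∈ (range (n+1)).erase k, (X + C (i:ℚ))).Monic :=
  monic_prod_of_monic _ _ (fun _ _ => monic_X_add_C _)

open Polynomial in
lemma aux_natDeg_prod (n k : ℕ) (hk : k ∈ range (n+1)) :
    (∏ i ∈ (range (n+1)).erase k, (X + C (i:ℚ))).natDegree = n := by
  rw [natDegree_prod _ _ (fun i _ => X_add_C_ne_zero _)]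
  simp only [natDegree_X_add_C, Finset.sum_const, smul_eq_mul, mul_one]
  simp [card_erase_of_mem hk]

open Polynomial in
lemma aux_monic_prodR (n : ℕ) : (∏ i ∈ range n, (X - C ((i:ℚ)+1))).Monic :=
  monic_prod_of_monic _ _ (fun _ _ => monic_X_sub_C _)

open Polynomial in
lemma aux_natDeg_prodR (n : ℕ) : (∏ i ∈ range n, (X - C ((i:ℚ)+1))).natDegree = n := by
  rw [natDegree_prod _ _ (fun i _ => X_sub_C_ne_zero _)]
  simp only [natDegree_X_sub_C, Finset.sum_const, smul_eq_mul, mul_one, Finset.card_range]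

open Polynomial in
lemma aux_deg_Lp (n : ℕ) : (auxLp n).degree < ((n + 1 : ℕ) : WithBot ℕ) := by
  unfold auxLp
  apply lt_of_le_of_lt (degree_sum_le _ _)
  rw [Finset.sup_lt_iff (by exact_mod_cast WithBot.bot_lt_coe (n+1))]
  intro k hk
  have hmon := aux_monic_prod n k
  have hdeg : (∏ i ∈ (range (n+1)).erase k, (X + C (i:ℚ))).degree = (n : WithBot ℕ) := by
    rw [degree_eq_natDegree hmon.ne_zero, aux_natDeg_prod n k hk]
  calc (C ((-1:ℚ)^k * (Nat.choose (n+k) k) * (Nat.choose n k)) *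
        ∏ i ∈ (range (n+1)).erase k, (X + C (i:ℚ))).degree
      ≤ (C ((-1:ℚ)^k * (Nat.choose (n+k) k) * (Nat.choose n k))).degree +
        (∏ i ∈ (range (n+1)).erase k, (X + C (i:ℚ))).degree := degree_mul_le _ _
    _ ≤ 0 + (n : WithBot ℕ) := by rw [hdeg]; gcongr; exact degree_C_le
    _ < ((n + 1 : ℕ) : WithBot ℕ) := by
        rw [zero_add]; exact_mod_cast Nat.lt_succ_self n

open Polynomial in
lemma aux_deg_Rp (n : ℕ) : (auxRp n).degree < ((n + 1 : ℕ) : WithBot ℕ) := by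
  unfold auxRp
  have hmon := aux_monic_prodR n
  have hdeg : (∏ i ∈ range n, (X - C ((i:ℚ)+1))).degree = (n : WithBot ℕ) := by
    rw [degree_eq_natDegree hmon.ne_zero, aux_natDeg_prodR n]
  calc (C ((-1:ℚ)^n) * ∏ i ∈ range n, (X - C ((i:ℚ)+1))).degree
      ≤ (C ((-1:ℚ)^n)).degree + (∏ i ∈ range n, (X - C ((i:ℚ)+1))).degree := degree_mul_le _ _
    _ ≤ 0 + (n : WithBot ℕ) := by rw [hdeg]; gcongr; exact degree_C_le
    _ < ((n + 1 : ℕ) : WithBot ℕ) := by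
        rw [zero_add]; exact_mod_cast Nat.lt_succ_self n

open Polynomial in
lemma aux_eval_eq (n m : ℕ) (hm : m ∈ range (n+1)) :
    (auxLp n).eval (-(m:ℚ)) = (auxRp n).eval (-(m:ℚ)) := by
  have hmn : m ≤ n := by simpa [Nat.lt_succ_iff] using hm
  -- Right side
  have hR : (auxRp n).eval (-(m:ℚ)) = ∏ i ∈ range n, ((m:ℚ) + 1 + i) := by
    unfold auxRp
    rw [eval_mul, eval_C, eval_prod]
    simp only [eval_sub, eval_X, eval_C]
    have : ∏ i ∈ range n, (-(m:ℚ) - ((i:ℚ)+1)) =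
        (∏ _i ∈ range n, (-1:ℚ)) * ∏ i ∈ range n, ((m:ℚ) + 1 + i) := by
      rw [← Finset.prod_mul_distrib]
      exact Finset.prod_congr rfl (fun i _ => by ring)
    rw [this, Finset.prod_const, Finset.card_range, ← mul_assoc, ← mul_pow]
    norm_num
  -- Left side reduces to the single term k = m
  have hL : (auxLp n).eval (-(m:ℚ)) =
      (-1:ℚ)^m * (Nat.choose (n+m) m) * (Nat.choose n m) *
        ∏ i ∈ (range (n+1)).erase m, (-(m:ℚ) + i) := by
    unfold auxLp
    rw [eval_finset_sum]
    simp only [eval_mul, eval_C, eval_prod, eval_add, eval_X]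
    rw [Finset.sum_eq_single m]
    · intro k hk hne
      have hmem : m ∈ (range (n+1)).erase k := Finset.mem_erase.mpr ⟨Ne.symm hne, hm⟩
      rw [Finset.prod_eq_zero hmem (by ring), mul_zero]
    · intro hnot; exact absurd hm hnot
  -- compute the erased product
  have hsplit : (range (n+1)).erase m = range m ∪ Ico (m+1) (n+1) := by
    ext i
    simp only [Finset.mem_erase, Finset.mem_range, Finset.mem_union, Finset.mem_Ico]
    omega
  have hdisj : Disjoint (range m) (Ico (m+1) (n+1)) := by
    rw [Finset.disjoint_left]
    intro a ha hb
    simp only [Finset.mem_range] at ha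
    simp only [Finset.mem_Ico] at hb
    omega
  have hP1 : ∏ i ∈ range m, (-(m:ℚ) + i) = (-1:ℚ)^m * (m.factorial : ℚ) := by
    have hc : ∀ i ∈ range m, (-(m:ℚ) + i) = (-1) * (((m - i : ℕ)) : ℚ) := by
      intro i hi
      have hi' : i ≤ m := le_of_lt (Finset.mem_range.mp hi)
      push_cast [Nat.cast_sub hi']
      ring
    rw [Finset.prod_congr rfl hc, Finset.prod_mul_distrib, Finset.prod_const, Finset.card_range,
      ← Nat.cast_prod, aux_prod_sub]
  have hP2 : ∏ i ∈ Ico (m+1) (n+1), (-(m:ℚ) + i) = ((n - m).factorial : ℚ) := by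
    rw [Finset.prod_Ico_eq_prod_range]
    have hnm : n + 1 - (m + 1) = n - m := by omega
    rw [hnm]
    have hc : ∀ i ∈ range (n - m), (-(m:ℚ) + (((m + 1 + i : ℕ)) : ℚ)) = ((i + 1 : ℕ) : ℚ) := by
      intro i _
      push_cast
      ring
    rw [Finset.prod_congr rfl hc, ← Nat.cast_prod]
    congr 1
    induction (n - m) with
    | zero => simp
    | succ t ih => rw [Finset.prod_range_succ, ih, Nat.factorial_succ]; ring
  have hE : ∏ i ∈ (range (n+1)).erase m, (-(m:ℚ) + i) =
      (-1:ℚ)^m * (m.factorial : ℚ) * ((n - m).factorial : ℚ) := by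
    rw [hsplit, Finset.prod_union hdisj, hP1, hP2]
  -- factorial identities
  have hfacne : ((m.factorial : ℚ)) ≠ 0 := by
    exact_mod_cast Nat.factorial_ne_zero m
  have hfac : (∏ i ∈ range n, ((m:ℚ) + 1 + i)) * (m.factorial : ℚ) =
      ((n + m).factorial : ℚ) := by
    have := aux_prod_factorial n m
    have h2 : ((∏ i ∈ range n, (m + 1 + i) : ℕ) : ℚ) * (m.factorial : ℚ) =
        ((n + m).factorial : ℚ) := by exact_mod_cast congrArg (Nat.cast (R := ℚ)) this
    rw [← h2, Nat.cast_prod]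
    congr 1
    apply Finset.prod_congr rfl
    intro i _
    push_cast
    ring
  have hcc : ((Nat.choose (n+m) m : ℚ)) * (Nat.choose n m : ℚ) * (m.factorial : ℚ) *
      ((n - m).factorial : ℚ) * (m.factorial : ℚ) = ((n + m).factorial : ℚ) := by
    have e1 : Nat.choose n m * m.factorial * (n - m).factorial = n.factorial :=
      Nat.choose_mul_factorial_mul_factorial hmn
    have e2 : Nat.choose (n+m) m * m.factorial * n.factorial = (n+m).factorial := by
      have := Nat.choose_mul_factorial_mul_factorial (Nat.le_add_left m n)
      have hnm : n + m - m = n := by omega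
      rwa [hnm] at this
    have : Nat.choose (n+m) m * (Nat.choose n m) * m.factorial * (n - m).factorial *
        m.factorial = (n+m).factorial := by
      calc Nat.choose (n+m) m * (Nat.choose n m) * m.factorial * (n - m).factorial * m.factorial
          = Nat.choose (n+m) m * m.factorial * (Nat.choose n m * m.factorial * (n - m).factorial) := by ring
        _ = Nat.choose (n+m) m * m.factorial * n.factorial := by rw [e1]
        _ = (n+m).factorial := e2
    exact_mod_cast this
  rw [hL, hR, hE]
  apply mul_right_cancel₀ hfacne
  calc (-1:ℚ)^m * (Nat.choose (n+m) m) * (Nat.choose n m) *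
        ((-1:ℚ)^m * (m.factorial : ℚ) * ((n - m).factorial : ℚ)) * (m.factorial : ℚ)
      = ((-1:ℚ) * (-1:ℚ))^m * ((Nat.choose (n+m) m : ℚ) * (Nat.choose n m : ℚ) *
          (m.factorial : ℚ) * ((n - m).factorial : ℚ) * (m.factorial : ℚ)) := by
        rw [mul_pow]; ring
    _ = ((n + m).factorial : ℚ) := by rw [hcc]; norm_num
    _ = (∏ i ∈ range n, ((m:ℚ) + 1 + i)) * (m.factorial : ℚ) := hfac.symm

lemma aux_LR (n : ℕ) : auxLp n = auxRp n := by
  apply Polynomial.eq_of_degrees_lt_of_eval_index_eq (v := fun m : ℕ => -(m:ℚ)) (range (n+1))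
  · intro a _ b _ hab
    have : (a:ℚ) = b := by
      have := neg_injective hab
      exact_mod_cast this
    exact_mod_cast this
  · simpa using aux_deg_Lp n
  · simpa using aux_deg_Rp n
  · exact fun m hm => aux_eval_eq n m hm

open Polynomial in
lemma aux_A (n : ℕ) :
    ∑ k ∈ range (n+1), (-1:ℚ)^k * (Nat.choose (n+k) k) * (Nat.choose n k) = (-1:ℚ)^n := by
  have h := congrArg (fun p => Polynomial.coeff p n) (aux_LR n)
  simp only [auxLp, auxRp] at h
  rw [Polynomial.finset_sum_coeff] at h
  have hL : ∀ k ∈ range (n+1),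
      (C ((-1:ℚ)^k * (Nat.choose (n+k) k) * (Nat.choose n k)) *
        ∏ i ∈ (range (n+1)).erase k, (X + C (i:ℚ))).coeff n =
      (-1:ℚ)^k * (Nat.choose (n+k) k) * (Nat.choose n k) := by
    intro k hk
    rw [coeff_C_mul]
    have : (∏ i ∈ (range (n+1)).erase k, (X + C (i:ℚ))).coeff n = 1 := by
      have := (aux_monic_prod n k).coeff_natDegree
      rwa [aux_natDeg_prod n k hk] at this
    rw [this, mul_one]
  rw [Finset.sum_congr rfl hL] at h
  rw [coeff_C_mul] at h
  have : (∏ i ∈ range n, (X - C ((i:ℚ)+1))).coeff n = 1 := by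
    have := (aux_monic_prodR n).coeff_natDegree
    rwa [aux_natDeg_prodR n] at this
  rw [this, mul_one] at h
  exact h

open Polynomial in
lemma aux_inner (n j : ℕ) (hj : j ∈ Icc 1 n) :
    ∑ k ∈ range (n+1), (-1:ℚ)^k * (Nat.choose (n+k) k) * (Nat.choose n k) * (1 / ((k:ℚ) + j)) = 0 := by
  rw [Finset.mem_Icc] at hj
  have h := congrArg (fun p => Polynomial.eval ((j:ℚ)) p) (aux_LR n)
  simp only [auxLp, auxRp, eval_finset_sum, eval_mul, eval_C, eval_prod, eval_add,
    eval_sub, eval_X] at h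
  -- RHS eval is 0
  have hR : ∏ i ∈ range n, ((j:ℚ) - ((i:ℚ)+1)) = 0 := by
    apply Finset.prod_eq_zero (i := j - 1) (by simp [Finset.mem_range]; omega)
    have : ((j - 1 : ℕ) : ℚ) = (j:ℚ) - 1 := by
      have : 1 ≤ j := hj.1
      push_cast [this]; ring
    rw [this]; ring
  rw [hR, mul_zero] at h
  -- so the sum of c_k * prod over erase is 0
  set Q : ℚ := ∏ i ∈ range (n+1), ((j:ℚ) + i) with hQdef
  have hQ : Q ≠ 0 := by
    rw [hQdef]
    apply Finset.prod_ne_zero_iff.mpr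
    intro i _
    have : (0:ℚ) < (j:ℚ) + i := by
      have : 1 ≤ j := hj.1
      have : (1:ℚ) ≤ (j:ℚ) := by exact_mod_cast this
      positivity
    linarith
  have key : ∑ k ∈ range (n+1),
      ((-1:ℚ)^k * (Nat.choose (n+k) k) * (Nat.choose n k) * (1 / ((k:ℚ) + j))) * Q = 0 := by
    rw [show (0:ℚ) = ∑ k ∈ range (n+1), (-1:ℚ)^k * (Nat.choose (n+k) k) * (Nat.choose n k) *
        ∏ i ∈ (range (n+1)).erase k, ((j:ℚ) + i) from h.symm]
    apply Finset.sum_congr rfl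
    intro k hk
    have hsplit : Q = ((j:ℚ) + k) * ∏ i ∈ (range (n+1)).erase k, ((j:ℚ) + i) :=
      (Finset.mul_prod_erase _ _ hk).symm
    have hkj : ((k:ℚ) + j) ≠ 0 := by
      have : 1 ≤ j := hj.1
      have h1 : (1:ℚ) ≤ (j:ℚ) := by exact_mod_cast this
      have h2 : (0:ℚ) ≤ (k:ℚ) := by positivity
      intro hc; linarith
    rw [hsplit]
    field_simp
    ring
  rw [← Finset.sum_mul] at key
  exact (mul_eq_zero.mp key).resolve_right hQ

theorem stmt_1 (n : ℕ) :
    ∑ k ∈ range (n + 1), (-1 : ℚ) ^ k * (Nat.choose (n + k) k) * (Nat.choose n k) *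
      (1 + 2 * k * (H (n + k) - H k)) = (-1 : ℚ) ^ n * (2 * n + 1) := by
  have hterm : ∀ k ∈ range (n+1),
      (-1 : ℚ) ^ k * (Nat.choose (n + k) k) * (Nat.choose n k) * (1 + 2 * k * (H (n + k) - H k)) =
      (-1 : ℚ) ^ k * (Nat.choose (n + k) k) * (Nat.choose n k) * (2 * n + 1) -
        ∑ j ∈ Icc 1 n,
          ((-1 : ℚ) ^ k * (Nat.choose (n + k) k) * (Nat.choose n k) * (1 / ((k:ℚ) + j))) * (2 * j) := by
    intro k _
    rw [aux_H_diff n k]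
    have key : 2 * (k:ℚ) * ∑ j ∈ Icc 1 n, 1 / ((k:ℚ) + j) =
        2 * n - ∑ j ∈ Icc 1 n, (2 * (j:ℚ)) / ((k:ℚ) + j) := by
      rw [Finset.mul_sum, eq_sub_iff_add_eq, ← Finset.sum_add_distrib]
      have hc : ∀ j ∈ Icc 1 n, 2 * (k:ℚ) * (1 / ((k:ℚ) + j)) + (2 * (j:ℚ)) / ((k:ℚ) + j)
          = 2 := by
        intro j hj
        have hj1 : 1 ≤ j := (Finset.mem_Icc.mp hj).1
        have hj1' : (1:ℚ) ≤ (j:ℚ) := by exact_mod_cast hj1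
        have hk0 : (0:ℚ) ≤ (k:ℚ) := by positivity
        have hne : ((k:ℚ) + j) ≠ 0 := by intro hc; linarith
        field_simp
      rw [Finset.sum_congr rfl hc, Finset.sum_const, Nat.card_Icc]
      have : n + 1 - 1 = n := by omega
      rw [this, nsmul_eq_mul]
      ring
    rw [key]
    rw [show (∑ j ∈ Icc 1 n,
        ((-1 : ℚ) ^ k * (Nat.choose (n + k) k) * (Nat.choose n k) * (1 / ((k:ℚ) + j))) * (2 * j))
      = (-1 : ℚ) ^ k * (Nat.choose (n + k) k) * (Nat.choose n k) *
        ∑ j ∈ Icc 1 n, (2 * (j:ℚ)) / ((k:ℚ) + j) from by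
        rw [Finset.mul_sum]
        apply Finset.sum_congr rfl
        intro j _
        ring]
    ring
  rw [Finset.sum_congr rfl hterm, Finset.sum_sub_distrib, ← Finset.sum_mul, aux_A]
  have hz : ∑ k ∈ range (n+1), ∑ j ∈ Icc 1 n,
      ((-1 : ℚ) ^ k * (Nat.choose (n + k) k) * (Nat.choose n k) * (1 / ((k:ℚ) + j))) * (2 * j)
      = 0 := by
    rw [Finset.sum_comm]
    apply Finset.sum_eq_zero
    intro j hj
    rw [← Finset.sum_mul, aux_inner n j hj, zero_mul]
  rw [hz, sub_zero]
end

section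
/- For every natural number n ≥ 1, ∑_{j=1}^{n} (-1)^j · C(n+j,j) · C(n,j) = -1 + (-1)^n. -/
open Finset

private lemma vander (n j : ℕ) :
    (n + j).choose j = ∑ i ∈ range (n + 1), n.choose i * j.choose i := by
  rw [Nat.add_choose_eq, Finset.Nat.sum_antidiagonal_eq_sum_range_succ_mk]
  have h1 : ∑ k ∈ range (j + 1), n.choose k * j.choose (j - k)
      = ∑ k ∈ range (j + 1), n.choose k * j.choose k := by
    refine Finset.sum_congr rfl fun k hk => ?_
    simp only [Finset.mem_range] at hk
    rw [Nat.choose_symm (by omega : k ≤ j)]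
  rw [h1]
  rcases le_total j n with h | h
  · rw [← Finset.sum_subset (Finset.range_subset_range.2 (by omega : j + 1 ≤ n + 1))]
    intro x hx hx2
    simp only [Finset.mem_range] at hx hx2
    rw [Nat.choose_eq_zero_of_lt (by omega : j < x), mul_zero]
  · rw [Finset.sum_subset (Finset.range_subset_range.2 (by omega : n + 1 ≤ j + 1))]
    intro x hx hx2
    simp only [Finset.mem_range] at hx hx2
    rw [Nat.choose_eq_zero_of_lt (by omega : n < x), zero_mul]

private lemma ortho (m i : ℕ) :
    ∑ j ∈ range (m + 1), (-1 : ℤ) ^ j * m.choose j * j.choose i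
      = if i = m then (-1 : ℤ) ^ m else 0 := by
  rcases le_or_gt i m with him | him
  · have hsub : Finset.Icc i m ⊆ Finset.range (m + 1) := by
      intro x hx; simp only [Finset.mem_Icc] at hx; simp only [Finset.mem_range]; omega
    rw [← Finset.sum_subset hsub (by
      intro x hx hx2
      simp only [Finset.mem_range] at hx
      simp only [Finset.mem_Icc] at hx2
      rw [Nat.choose_eq_zero_of_lt (by omega : x < i)]
      simp)]
    rw [← Finset.Ico_add_one_right_eq_Icc, Finset.sum_Ico_eq_sum_range]
    have hterm : ∀ k ∈ range (m + 1 - i),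
        (-1 : ℤ) ^ (i + k) * (m.choose (i + k) : ℤ) * ((i + k).choose i : ℤ)
          = (-1 : ℤ) ^ i * (m.choose i : ℤ) * ((-1 : ℤ) ^ k * ((m - i).choose k : ℤ)) := by
      intro k hk
      simp only [Finset.mem_range] at hk
      have h := Nat.choose_mul (n := m) (by omega : i ≤ i + k)
      have h2 : i + k - i = k := by omega
      rw [h2] at h
      have hc : (m.choose (i + k) : ℤ) * ((i + k).choose i : ℤ)
          = (m.choose i : ℤ) * ((m - i).choose k : ℤ) := by exact_mod_cast congrArg Nat.cast h
      rw [pow_add]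
      ring_nf
      ring_nf at hc
      rw [hc]
    rw [Finset.sum_congr rfl hterm, ← Finset.mul_sum]
    have h3 : m + 1 - i = (m - i) + 1 := by omega
    rw [h3, Int.alternating_sum_range_choose]
    rcases eq_or_lt_of_le him with h | h
    · subst h; simp
    · rw [if_neg (by omega), if_neg (by omega)]; ring
  · rw [if_neg (by omega)]
    refine Finset.sum_eq_zero fun j hj => ?_
    simp only [Finset.mem_range] at hj
    rw [Nat.choose_eq_zero_of_lt (by omega : j < i)]
    simp

theorem stmt_2 (n : ℕ) (hn : 1 ≤ n) :
    ∑ j ∈ Icc 1 n, (-1 : ℤ) ^ j * (Nat.choose (n + j) j) * (Nat.choose n j) =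
      -1 + (-1 : ℤ) ^ n := by
  have key : ∑ j ∈ range (n + 1), (-1 : ℤ) ^ j * ((n + j).choose j : ℤ) * (n.choose j : ℤ)
      = (-1 : ℤ) ^ n := by
    have h1 : ∀ j ∈ range (n + 1),
        (-1 : ℤ) ^ j * ((n + j).choose j : ℤ) * (n.choose j : ℤ)
          = ∑ i ∈ range (n + 1),
              (n.choose i : ℤ) * ((-1 : ℤ) ^ j * (n.choose j : ℤ) * (j.choose i : ℤ)) := by
      intro j _
      rw [vander n j]
      push_cast
      rw [Finset.mul_sum, Finset.sum_mul]
      refine Finset.sum_congr rfl fun i _ => ?_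
      ring
    rw [Finset.sum_congr rfl h1, Finset.sum_comm]
    have h2 : ∀ i ∈ range (n + 1),
        ∑ j ∈ range (n + 1),
            (n.choose i : ℤ) * ((-1 : ℤ) ^ j * (n.choose j : ℤ) * (j.choose i : ℤ))
          = (n.choose i : ℤ) * (if i = n then (-1 : ℤ) ^ n else 0) := by
      intro i _
      rw [← Finset.mul_sum, ortho n i]
    rw [Finset.sum_congr rfl h2]
    simp only [mul_ite, mul_zero]
    rw [Finset.sum_ite_eq' (range (n+1)) n]
    simp
  have hsplit : ∑ j ∈ range (n + 1), (-1 : ℤ) ^ j * ((n + j).choose j : ℤ) * (n.choose j : ℤ)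
      = 1 + ∑ j ∈ Icc 1 n, (-1 : ℤ) ^ j * ((n + j).choose j : ℤ) * (n.choose j : ℤ) := by
    rw [Finset.range_eq_Ico, ← Finset.sum_Ico_consecutive _ (by omega : 0 ≤ 1) (by omega : 1 ≤ n + 1)]
    have : Finset.Ico 1 (n + 1) = Finset.Icc 1 n := by rw [Finset.Ico_add_one_right_eq_Icc]
    rw [this]
    norm_num
  rw [hsplit] at key
  linarith
end

section
/- For every positive integer n, ∑_{j=1}^{n} (-1)^j · C(n+j,j) · C(n,j) · j^2 · (2(H_{n+j} − H_j)^2 − (H_{n+j}^{(2)} − H_j^{(2)})) + ∑_{j=1}^{n} (-1)^j / (C(n+j,j) · C(n,j)) = n(2n−1)(-1)^n, as an identity of rational numbers. -/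
open Finset

/-- Generalized harmonic numbers `H_n^{(2)} = ∑_{j=1}^n 1/j^2`. -/
def H2 (n : ℕ) : ℚ := ∑ j ∈ Icc 1 n, (1 : ℚ) / (j : ℚ) ^ 2


lemma pascal_sum (n : ℕ) (f : ℕ → ℚ) :
    ∑ j ∈ range (n+2), (-1:ℚ)^j * ((n+1).choose j) * f j
      = ∑ j ∈ range (n+1), (-1:ℚ)^j * (n.choose j) * (f j - f (j+1)) := by
  rw [Finset.sum_range_succ']
  have h1 : ∀ j, ((n+1).choose (j+1) : ℚ) = n.choose j + n.choose (j+1) := by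
    intro j; rw [Nat.choose_succ_succ]; push_cast; ring
  calc (∑ j ∈ range (n+1), (-1:ℚ)^(j+1) * ((n+1).choose (j+1)) * f (j+1))
        + (-1:ℚ)^0 * ((n+1).choose 0) * f 0
      = (∑ j ∈ range (n+1), ((-1:ℚ)^(j+1) * (n.choose j) * f (j+1)
          + (-1:ℚ)^(j+1) * (n.choose (j+1)) * f (j+1))) + f 0 := by
        rw [show ((-1:ℚ)^0 * (((n+1).choose 0 : ℕ) : ℚ) * f 0) = f 0 by simp]
        congr 1
        exact Finset.sum_congr rfl (fun j _ => by rw [h1 j]; ring)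
    _ = (∑ j ∈ range (n+1), (-1:ℚ)^(j+1) * (n.choose j) * f (j+1))
        + ((∑ j ∈ range (n+1), (-1:ℚ)^(j+1) * (n.choose (j+1)) * f (j+1)) + f 0) := by
        rw [Finset.sum_add_distrib]; ring
    _ = (∑ j ∈ range (n+1), (-1:ℚ)^(j+1) * (n.choose j) * f (j+1))
        + ∑ j ∈ range (n+2), (-1:ℚ)^j * (n.choose j) * f j := by
        rw [Finset.sum_range_succ' (fun j => (-1:ℚ)^j * (n.choose j) * f j) (n+1)]
        simp
    _ = ∑ j ∈ range (n+1), (-1:ℚ)^j * (n.choose j) * (f j - f (j+1)) := by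
        rw [Finset.sum_range_succ (fun j => (-1:ℚ)^j * (n.choose j) * f j) (n+1),
          Nat.choose_succ_self]
        push_cast
        rw [mul_zero, zero_mul, add_zero, ← Finset.sum_add_distrib]
        exact Finset.sum_congr rfl (fun j _ => by ring)

lemma monomial_sum (n : ℕ) : ∀ k : ℕ, k ≤ n →
    ∑ j ∈ range (n+1), (-1:ℚ)^j * (n.choose j) * (j:ℚ)^k
      = if k = n then (-1:ℚ)^n * n.factorial else 0 := by
  induction n with
  | zero =>
      intro k hk
      interval_cases k
      simp
  | succ n ih =>
      intro k hk
      rw [pascal_sum n (fun j => (j:ℚ)^k)]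
      have expand : ∀ j : ℕ, (j:ℚ)^k - ((j:ℚ)+1)^k
          = -∑ t ∈ range k, (j:ℚ)^t * (k.choose t : ℚ) := by
        intro j
        rw [add_pow, Finset.sum_range_succ]
        simp only [one_pow, mul_one, Nat.choose_self, Nat.cast_one]
        ring
      simp only [Nat.cast_succ] at expand ⊢
      calc ∑ j ∈ range (n+1), (-1:ℚ)^j * (n.choose j) * ((j:ℚ)^k - ((j:ℚ)+1)^k)
          = ∑ j ∈ range (n+1), ∑ t ∈ range k,
              -((k.choose t : ℚ) * ((-1:ℚ)^j * (n.choose j) * (j:ℚ)^t)) := by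
            apply Finset.sum_congr rfl
            intro j _
            rw [expand j, mul_neg, Finset.mul_sum, ← Finset.sum_neg_distrib]
            exact Finset.sum_congr rfl (fun t _ => by ring)
        _ = -∑ t ∈ range k, (k.choose t : ℚ) *
              ∑ j ∈ range (n+1), (-1:ℚ)^j * (n.choose j) * (j:ℚ)^t := by
            rw [Finset.sum_comm, ← Finset.sum_neg_distrib]
            exact Finset.sum_congr rfl (fun t _ => by rw [Finset.mul_sum, ← Finset.sum_neg_distrib])
        _ = if k = n+1 then (-1:ℚ)^(n+1) * (n+1).factorial else 0 := by
            rcases Nat.lt_or_ge k (n+1) with h | h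
            · have : ∀ t ∈ range k, (k.choose t : ℚ) *
                  (∑ j ∈ range (n+1), (-1:ℚ)^j * (n.choose j) * (j:ℚ)^t) = 0 := by
                intro t ht
                rw [ih t (by have := Finset.mem_range.mp ht; omega)]
                rw [if_neg (by have := Finset.mem_range.mp ht; omega)]
                ring
              rw [Finset.sum_congr rfl this]
              simp [Nat.ne_of_lt h]
            · have hk1 : k = n+1 := le_antisymm hk h
              subst hk1
              rw [Finset.sum_range_succ]
              have : ∀ t ∈ range n, ((n+1).choose t : ℚ) *
                  (∑ j ∈ range (n+1), (-1:ℚ)^j * (n.choose j) * (j:ℚ)^t) = 0 := by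
                intro t ht
                rw [ih t (by have := Finset.mem_range.mp ht; omega), if_neg (by have := Finset.mem_range.mp ht; omega)]
                ring
              rw [Finset.sum_congr rfl this]
              rw [ih n le_rfl, if_pos rfl]
              simp [Nat.choose_succ_self_right, Nat.factorial_succ]
              push_cast
              ring
lemma poly_sum (n : ℕ) (p : Polynomial ℚ) (hp : p.natDegree ≤ n) :
    ∑ j ∈ range (n+1), (-1:ℚ)^j * (n.choose j) * p.eval (j:ℚ)
      = (-1:ℚ)^n * n.factorial * p.coeff n := by
  have hev : ∀ j : ℕ, p.eval (j:ℚ) = ∑ k ∈ range (n+1), p.coeff k * (j:ℚ)^k := by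
    intro j
    exact p.eval_eq_sum_range' (lt_of_le_of_lt hp (Nat.lt_succ_self n)) _
  calc ∑ j ∈ range (n+1), (-1:ℚ)^j * (n.choose j) * p.eval (j:ℚ)
      = ∑ j ∈ range (n+1), ∑ k ∈ range (n+1),
          p.coeff k * ((-1:ℚ)^j * (n.choose j) * (j:ℚ)^k) := by
        apply Finset.sum_congr rfl
        intro j _
        rw [hev j, Finset.mul_sum]
        exact Finset.sum_congr rfl (fun k _ => by ring)
    _ = ∑ k ∈ range (n+1), p.coeff k *
          ∑ j ∈ range (n+1), (-1:ℚ)^j * (n.choose j) * (j:ℚ)^k := by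
        rw [Finset.sum_comm]
        exact Finset.sum_congr rfl (fun k _ => by rw [Finset.mul_sum])
    _ = (-1:ℚ)^n * n.factorial * p.coeff n := by
        rw [Finset.sum_congr rfl (fun k (hk : k ∈ range (n+1)) => by
          rw [monomial_sum n k (by have := Finset.mem_range.mp hk; omega)])]
        rw [Finset.sum_congr rfl (fun k (_ : k ∈ range (n+1)) => by
          rw [show p.coeff k * (if k = n then (-1:ℚ)^n * n.factorial else 0)
            = (if k = n then p.coeff k * ((-1:ℚ)^n * n.factorial) else 0) from by split <;> simp])]
        rw [Finset.sum_ite_eq' (range (n+1)) n (fun k => p.coeff k * ((-1:ℚ)^n * n.factorial))]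
        rw [if_pos (Finset.self_mem_range_succ n)]
        ring

lemma inv_sum (n : ℕ) : ∀ m : ℕ,
    ∑ j ∈ range (n+1), (-1:ℚ)^j * (n.choose j) / ((m:ℚ)+1+j)
      = (n.factorial : ℚ) * m.factorial / (n+m+1).factorial := by
  induction n with
  | zero =>
      intro m
      have hm : ((m:ℚ)+1) ≠ 0 := by positivity
      simp only [Finset.sum_range_one, pow_zero, Nat.choose_zero_right, Nat.cast_one,
        Nat.factorial_zero, Nat.cast_ofNat]
      rw [show (0+m+1) = m+1 from by ring, Nat.factorial_succ]
      push_cast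
      field_simp
      simp [hm]
  | succ n ih =>
      intro m
      have key : ∑ j ∈ range (n+2), (-1:ℚ)^j * ((n+1).choose j) / ((m:ℚ)+1+j)
          = ∑ j ∈ range (n+1), (-1:ℚ)^j * (n.choose j) *
              (1/((m:ℚ)+1+j) - 1/((m:ℚ)+2+j)) := by
        rw [show (∑ j ∈ range (n+2), (-1:ℚ)^j * ((n+1).choose j) / ((m:ℚ)+1+j))
            = ∑ j ∈ range (n+2), (-1:ℚ)^j * ((n+1).choose j) * (fun j : ℕ => 1/((m:ℚ)+1+j)) j
            from Finset.sum_congr rfl (fun j _ => by ring)]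
        rw [pascal_sum n (fun j : ℕ => 1/((m:ℚ)+1+j))]
        exact Finset.sum_congr rfl (fun j _ => by push_cast; ring_nf)
      rw [key]
      have split : ∀ j ∈ range (n+1), (-1:ℚ)^j * (n.choose j) *
              (1/((m:ℚ)+1+j) - 1/((m:ℚ)+2+j))
          = (-1:ℚ)^j * (n.choose j) / ((m:ℚ)+1+j)
            - (-1:ℚ)^j * (n.choose j) / (((m+1:ℕ):ℚ)+1+j) := by
        intro j _
        push_cast
        ring
      rw [Finset.sum_congr rfl split, Finset.sum_sub_distrib, ih m, ih (m+1)]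
      have h1 : ((n+m+1).factorial : ℚ) ≠ 0 := by positivity
      have h2 : ((n+(m+1)+1).factorial : ℚ) ≠ 0 := by positivity
      have e2 : (n+(m+1)+1) = (n+m+1)+1 := by ring
      have e3 : ((n+1)+m+1) = (n+m+1)+1 := by ring
      rw [e2, e3]
      rw [Nat.factorial_succ (n+m+1), Nat.factorial_succ m, Nat.factorial_succ n]
      push_cast
      field_simp
      ring

lemma prod_Icc_fac (n j : ℕ) :
    ∏ t ∈ Icc 1 n, ((j:ℚ)+t) = (n+j).factorial / j.factorial := by
  induction n with
  | zero => simp [div_self (by positivity : ((j.factorial:ℚ)) ≠ 0)]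
  | succ n ih =>
      rw [Finset.prod_Icc_succ_top (Nat.le_add_left 1 n), ih]
      have : ((j.factorial : ℚ)) ≠ 0 := by positivity
      rw [show (n+1+j) = (n+j)+1 from by ring, Nat.factorial_succ]
      push_cast
      field_simp
      ring

lemma choose_cast (n j : ℕ) :
    ((n+j).choose j : ℚ) = (n+j).factorial / (n.factorial * j.factorial) := by
  have h := Nat.choose_mul_factorial_mul_factorial (Nat.le_add_left j n)
  have hne : ((n.factorial : ℚ) * j.factorial) ≠ 0 := by positivity
  rw [show n+j-j = n from by omega] at h
  field_simp
  rw [show ((n+j).factorial : ℚ) = (((n+j).choose j * j.factorial * n.factorial : ℕ) : ℚ) from by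
    rw [h]]
  push_cast
  ring

lemma prod_Icc_id (m : ℕ) : ∏ t ∈ Icc 1 m, t = m.factorial := by
  rw [← Finset.Ico_add_one_right_eq_Icc, Finset.prod_Ico_eq_prod_range]
  simpa [add_comm] using Finset.prod_range_add_one_eq_factorial m

lemma prod_Icc_choose (n j : ℕ) :
    ∏ t ∈ Icc 1 n, ((j:ℚ)+t) = (n.factorial : ℚ) * ((n+j).choose j) := by
  rw [prod_Icc_fac, choose_cast]
  have h1 : ((j.factorial : ℚ)) ≠ 0 := by positivity
  have h2 : ((n.factorial : ℚ)) ≠ 0 := by positivity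
  field_simp

lemma prod_low (m : ℕ) :
    ∏ t ∈ Icc 1 m, ((t:ℚ) - (m+1)) = (-1:ℚ)^m * m.factorial := by
  have step1 : ∏ t ∈ Icc 1 m, ((t:ℚ) - (m+1))
      = ∏ t ∈ Icc 1 m, ((-1:ℚ) * ((m+1-t : ℕ) : ℚ)) := by
    apply Finset.prod_congr rfl
    intro t ht
    have h := Finset.mem_Icc.mp ht
    have : ((m+1-t : ℕ) : ℚ) = (m:ℚ)+1-t := by
      push_cast [Nat.cast_sub (by omega : t ≤ m+1)]
      ring
    rw [this]; ring
  rw [step1, Finset.prod_mul_distrib, Finset.prod_const]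
  rw [Nat.card_Icc]
  have step2 : ∏ t ∈ Icc 1 m, ((m+1-t : ℕ) : ℚ) = ((m.factorial : ℕ) : ℚ) := by
    rw [← Nat.cast_prod]
    congr 1
    rw [← prod_Icc_id m]
    apply Finset.prod_nbij' (fun t => m+1-t) (fun s => m+1-s)
    · intro a ha; have := Finset.mem_Icc.mp ha; apply Finset.mem_Icc.mpr; omega
    · intro a ha; have := Finset.mem_Icc.mp ha; apply Finset.mem_Icc.mpr; omega
    · intro a ha; have := Finset.mem_Icc.mp ha; omega
    · intro a ha; have := Finset.mem_Icc.mp ha; omega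
    · intro a ha; rfl
  rw [step2]
  simp

lemma prod_high (i n : ℕ) (h : i ≤ n) :
    ∏ t ∈ Icc (i+1) n, ((t:ℚ) - i) = ((n-i).factorial : ℚ) := by
  have step1 : ∏ t ∈ Icc (i+1) n, ((t:ℚ) - i) = ∏ t ∈ Icc (i+1) n, (((t - i:ℕ)) : ℚ) := by
    apply Finset.prod_congr rfl
    intro t ht
    have h := Finset.mem_Icc.mp ht
    push_cast [Nat.cast_sub (by omega : i ≤ t)]
    ring
  rw [step1, ← Nat.cast_prod]
  congr 1
  rw [← prod_Icc_id (n-i)]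
  apply Finset.prod_nbij' (fun t => t - i) (fun s => s + i)
  · intro a ha; have := Finset.mem_Icc.mp ha; apply Finset.mem_Icc.mpr; omega
  · intro a ha; have := Finset.mem_Icc.mp ha; apply Finset.mem_Icc.mpr; omega
  · intro a ha; have := Finset.mem_Icc.mp ha; omega
  · intro a ha; have := Finset.mem_Icc.mp ha; omega
  · intro a ha; rfl

lemma prod_erase_eq (n i : ℕ) (h1 : 1 ≤ i) (h2 : i ≤ n) :
    ∏ t ∈ (Icc 1 n).erase i, ((t:ℚ) - i)
      = (-1:ℚ)^(i-1) * ((i-1).factorial : ℚ) * ((n-i).factorial : ℚ) := by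
  have hsplit : (Icc 1 n).erase i = Icc 1 (i-1) ∪ Icc (i+1) n := by
    ext t
    simp only [Finset.mem_erase, Finset.mem_Icc, Finset.mem_union]
    omega
  have hdisj : Disjoint (Icc 1 (i-1)) (Icc (i+1) n) := by
    rw [Finset.disjoint_left]
    intro a ha hb
    have := Finset.mem_Icc.mp ha
    have := Finset.mem_Icc.mp hb
    omega
  rw [hsplit, Finset.prod_union hdisj, prod_high i n h2]
  obtain ⟨m, rfl⟩ : ∃ m, i = m + 1 := ⟨i - 1, by omega⟩
  have : ((m+1 : ℕ) : ℚ) = (m:ℚ)+1 := by push_cast; ring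
  rw [show m+1-1 = m from by omega]
  rw [Finset.prod_congr rfl (fun t _ => by rw [this])]
  rw [prod_low m]

-- basic facts about the polynomial X^2 * ∏_{t ∈ S} (X + t)
lemma ppoly_monic (S : Finset ℕ) :
    ((Polynomial.X^2 * ∏ t ∈ S, (Polynomial.X + Polynomial.C (t:ℚ)))).Monic := by
  apply Polynomial.Monic.mul (Polynomial.monic_X_pow 2)
  exact Polynomial.monic_prod_of_monic _ _ (fun t _ => Polynomial.monic_X_add_C _)

lemma ppoly_natDegree (S : Finset ℕ) :
    ((Polynomial.X^2 * ∏ t ∈ S, (Polynomial.X + Polynomial.C (t:ℚ)))).natDegree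
      = 2 + S.card := by
  rw [Polynomial.Monic.natDegree_mul (Polynomial.monic_X_pow 2)
    (Polynomial.monic_prod_of_monic _ _ (fun t _ => Polynomial.monic_X_add_C _)),
    Polynomial.natDegree_X_pow]
  congr 1
  rw [Polynomial.natDegree_prod_of_monic _ _ (fun t _ => Polynomial.monic_X_add_C _)]
  rw [Finset.sum_congr rfl (fun t (_ : t ∈ S) => Polynomial.natDegree_X_add_C (t:ℚ)),
    Finset.sum_const, smul_eq_mul, mul_one]

lemma ppoly_eval (S : Finset ℕ) (x : ℚ) :
    ((Polynomial.X^2 * ∏ t ∈ S, (Polynomial.X + Polynomial.C (t:ℚ)))).eval x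
      = x^2 * ∏ t ∈ S, (x + (t:ℚ)) := by
  simp [Polynomial.eval_prod]

lemma U_offdiag (n i i' : ℕ) (hi1 : 1 ≤ i) (hi2 : i ≤ n) (hi'1 : 1 ≤ i') (hi'2 : i' ≤ n)
    (hne : i ≠ i') :
    ∑ j ∈ range (n+1), (-1:ℚ)^j * (n.choose j) *
        (((n+j).choose j : ℚ) * (j:ℚ)^2 / (((i:ℚ)+j) * ((i':ℚ)+j)))
      = (-1:ℚ)^n := by
  set S := ((Icc 1 n).erase i).erase i' with hS
  set p := Polynomial.X^2 * ∏ t ∈ S, (Polynomial.X + Polynomial.C (t:ℚ)) with hp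
  have hmemi : i ∈ Icc 1 n := Finset.mem_Icc.mpr ⟨hi1, hi2⟩
  have hmemi' : i' ∈ (Icc 1 n).erase i :=
    Finset.mem_erase.mpr ⟨fun h => hne (h.symm), Finset.mem_Icc.mpr ⟨hi'1, hi'2⟩⟩
  have hcard : S.card = n - 2 := by
    rw [hS, Finset.card_erase_of_mem hmemi', Finset.card_erase_of_mem hmemi, Nat.card_Icc]
    omega
  have hdeg : p.natDegree = n := by
    rw [hp, ppoly_natDegree, hcard]; omega
  have hcoeff : p.coeff n = 1 := by
    have := (ppoly_monic S).coeff_natDegree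
    rw [← hp] at this
    rw [← hdeg]; exact this
  have hprod : ∀ j : ℕ, ((i:ℚ)+j) * ((i':ℚ)+j) * ((j:ℚ)^2 * ∏ t ∈ S, ((j:ℚ) + t))
      = (n.factorial : ℚ) * ((n+j).choose j) * (j:ℚ)^2 := by
    intro j
    rw [← prod_Icc_choose n j]
    rw [← Finset.mul_prod_erase _ _ hmemi, ← Finset.mul_prod_erase _ _ hmemi']
    rw [← hS]
    ring
  have hpoint : ∀ j : ℕ, ((n+j).choose j : ℚ) * (j:ℚ)^2 / (((i:ℚ)+j) * ((i':ℚ)+j))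
      = p.eval (j:ℚ) / n.factorial := by
    intro j
    have hine : ((i:ℚ)+j) ≠ 0 := by positivity
    have hine' : ((i':ℚ)+j) ≠ 0 := by positivity
    have hfac : ((n.factorial : ℚ)) ≠ 0 := by positivity
    rw [hp, ppoly_eval]
    rw [div_eq_div_iff (by positivity) hfac]
    rw [mul_comm (((n+j).choose j : ℚ) * (j:ℚ)^2) (n.factorial : ℚ),
      ← mul_assoc ((n.factorial : ℚ))]
    rw [← hprod j]
    ring
  rw [Finset.sum_congr rfl (fun j _ => by rw [hpoint j])]
  have hfac : ((n.factorial : ℚ)) ≠ 0 := by positivity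
  calc ∑ j ∈ range (n+1), (-1:ℚ)^j * (n.choose j) * (p.eval (j:ℚ) / n.factorial)
      = (∑ j ∈ range (n+1), (-1:ℚ)^j * (n.choose j) * p.eval (j:ℚ)) / n.factorial := by
        rw [Finset.sum_div]
        exact Finset.sum_congr rfl (fun j _ => by ring)
    _ = (-1:ℚ)^n := by
        rw [poly_sum n p (le_of_eq hdeg), hcoeff]
        field_simp

lemma choose_cast' (n i : ℕ) (h : i ≤ n) :
    ((n.choose i : ℕ) : ℚ) = (n.factorial : ℚ) / (i.factorial * (n-i).factorial) := by
  have hh := Nat.choose_mul_factorial_mul_factorial h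
  have hne : ((i.factorial : ℚ) * (n-i).factorial) ≠ 0 := by positivity
  field_simp
  rw [show ((n.factorial : ℕ) : ℚ) = ((n.choose i * i.factorial * (n-i).factorial : ℕ) : ℚ) from by
    rw [hh]]
  push_cast
  ring

lemma U_diag (n i : ℕ) (hi1 : 1 ≤ i) (hi2 : i ≤ n) :
    ∑ j ∈ range (n+1), (-1:ℚ)^j * (n.choose j) *
        (((n+j).choose j : ℚ) * (j:ℚ)^2 / (((i:ℚ)+j) * ((i:ℚ)+j)))
      = (-1:ℚ)^n + (-1:ℚ)^(i-1) / (((n+i).choose i : ℚ) * (n.choose i)) := by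
  set S := (Icc 1 n).erase i with hS
  set q := Polynomial.X^2 * ∏ t ∈ S, (Polynomial.X + Polynomial.C (t:ℚ)) with hq
  have hmemi : i ∈ Icc 1 n := Finset.mem_Icc.mpr ⟨hi1, hi2⟩
  have hcard : S.card = n - 1 := by
    rw [hS, Finset.card_erase_of_mem hmemi, Nat.card_Icc]; omega
  have hdeg : q.natDegree = n + 1 := by
    rw [hq, ppoly_natDegree, hcard]; omega
  have hqmonic : q.Monic := ppoly_monic S
  set a : ℚ := -(i:ℚ) with ha
  set g := q /ₘ (Polynomial.X - Polynomial.C a) with hg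
  set c := q.eval a with hc
  have hdecomp : q = (Polynomial.X - Polynomial.C a) * g + Polynomial.C c := by
    have h := Polynomial.modByMonic_add_div q (Polynomial.X - Polynomial.C a)
    rw [Polynomial.modByMonic_X_sub_C_eq_C_eval] at h
    rw [← h]; ring
  have hgdeg : g.natDegree = n := by
    rw [hg, Polynomial.natDegree_divByMonic q (Polynomial.monic_X_sub_C a), hdeg,
      Polynomial.natDegree_X_sub_C]
    omega
  have hgcoeff : g.coeff n = 1 := by
    have h1 : q.coeff (n+1) = 1 := by
      have := hqmonic.coeff_natDegree
      rwa [hdeg] at this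
    have h2 : g.coeff (n+1) = 0 := Polynomial.coeff_eq_zero_of_natDegree_lt (by omega)
    have h3 : q.coeff (n+1) = g.coeff n - a * g.coeff (n+1) := by
      rw [hdecomp]
      rw [Polynomial.coeff_add, Polynomial.coeff_C, if_neg (by omega : ¬ (n+1 = 0))]
      rw [sub_mul, Polynomial.coeff_sub, Polynomial.coeff_X_mul, Polynomial.coeff_C_mul]
      ring
    rw [h1, h2] at h3
    linarith [h3]
  have heval : ∀ j : ℕ, q.eval (j:ℚ) = ((j:ℚ) + i) * g.eval (j:ℚ) + c := by
    intro j
    conv_lhs => rw [hdecomp]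
    simp [ha]
  have hqev : ∀ j : ℕ, ((i:ℚ)+j) * q.eval (j:ℚ)
      = (n.factorial : ℚ) * ((n+j).choose j) * (j:ℚ)^2 := by
    intro j
    rw [hq, ppoly_eval, ← prod_Icc_choose n j, ← Finset.mul_prod_erase _ _ hmemi, ← hS]
    ring
  have hpoint : ∀ j : ℕ, ((n+j).choose j : ℚ) * (j:ℚ)^2 / (((i:ℚ)+j) * ((i:ℚ)+j))
      = (g.eval (j:ℚ) + c / ((i:ℚ)+j)) / n.factorial := by
    intro j
    have hine : ((i:ℚ)+j) ≠ 0 := by positivity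
    have hfac : ((n.factorial : ℚ)) ≠ 0 := by positivity
    have key : ((i:ℚ)+j) * (((i:ℚ)+j) * g.eval (j:ℚ) + c)
        = (n.factorial : ℚ) * ((n+j).choose j) * (j:ℚ)^2 := by
      rw [← hqev j, heval j]; ring
    field_simp
    linear_combination -key
  rw [Finset.sum_congr rfl (fun j _ => by rw [hpoint j])]
  have hfac : ((n.factorial : ℚ)) ≠ 0 := by positivity
  have hsplit : ∑ j ∈ range (n+1), (-1:ℚ)^j * (n.choose j) *
        ((g.eval (j:ℚ) + c / ((i:ℚ)+j)) / n.factorial)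
      = ((∑ j ∈ range (n+1), (-1:ℚ)^j * (n.choose j) * g.eval (j:ℚ))
          + c * ∑ j ∈ range (n+1), (-1:ℚ)^j * (n.choose j) / ((i:ℚ)+j)) / n.factorial := by
    have hterm : ∀ j ∈ range (n+1), (-1:ℚ)^j * (n.choose j) *
          ((g.eval (j:ℚ) + c / ((i:ℚ)+j)) / n.factorial)
        = ((-1:ℚ)^j * (n.choose j) * g.eval (j:ℚ)) / n.factorial
          + (c * ((-1:ℚ)^j * (n.choose j) / ((i:ℚ)+j))) / n.factorial := by
      intro j _; ring
    rw [Finset.sum_congr rfl hterm, Finset.sum_add_distrib, ← Finset.sum_div, ← Finset.sum_div,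
      ← Finset.mul_sum]
    ring
  rw [hsplit, poly_sum n g (le_of_eq hgdeg), hgcoeff]
  obtain ⟨m, rfl⟩ : ∃ m, i = m + 1 := ⟨i - 1, by omega⟩
  have hmsum : ∑ j ∈ range (n+1), (-1:ℚ)^j * (n.choose j) / (((m+1:ℕ):ℚ)+j)
      = ∑ j ∈ range (n+1), (-1:ℚ)^j * (n.choose j) / ((m:ℚ)+1+j) := by
    apply Finset.sum_congr rfl
    intro j _
    push_cast
    ring
  rw [hmsum, inv_sum n m]
  have hcval : c = ((m+1:ℕ):ℚ)^2 *
      ((-1:ℚ)^m * ((m.factorial : ℕ):ℚ) * ((n-(m+1)).factorial : ℚ)) := by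
    rw [hc, hq, ppoly_eval, ha]
    have h1 : ∏ t ∈ S, (-(((m+1:ℕ):ℚ)) + t) = ∏ t ∈ S, ((t:ℚ) - ((m+1:ℕ):ℚ)) :=
      Finset.prod_congr rfl (fun t _ => by ring)
    rw [h1, hS, prod_erase_eq n (m+1) hi1 hi2]
    rw [show m+1-1 = m from rfl]
    ring
  rw [hcval]
  rw [show m+1-1 = m from rfl]
  have e1 : ((n+(m+1)).choose (m+1) : ℚ)
      = ((n+(m+1)).factorial : ℚ) / (n.factorial * (m+1).factorial) := choose_cast n (m+1)
  have e2 : ((n.choose (m+1)) : ℚ)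
      = (n.factorial : ℚ) / ((m+1).factorial * (n-(m+1)).factorial) := choose_cast' n (m+1) hi2
  rw [e1, e2]
  have hne1 : ((n.factorial : ℚ)) ≠ 0 := by positivity
  have hne2 : (((m+1).factorial : ℚ)) ≠ 0 := by positivity
  have hne3 : (((n-(m+1)).factorial : ℚ)) ≠ 0 := by positivity
  have hne4 : (((n+(m+1)).factorial : ℚ)) ≠ 0 := by positivity
  have hne5 : (((n+m+1).factorial : ℚ)) ≠ 0 := by positivity
  have hee : ((n+(m+1)).factorial : ℚ) = ((n+m+1).factorial : ℚ) := by
    rw [show n+(m+1) = n+m+1 from by omega]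
  rw [hee, Nat.factorial_succ m]
  push_cast
  field_simp

lemma sum_shift (n j : ℕ) (f : ℚ → ℚ) :
    ∑ t ∈ Icc 1 (n+j), f t - ∑ t ∈ Icc 1 j, f t = ∑ i ∈ Icc 1 n, f ((i:ℚ)+j) := by
  have hsplit : Icc 1 (n+j) = Icc 1 j ∪ Icc (j+1) (n+j) := by
    ext t; simp only [Finset.mem_Icc, Finset.mem_union]; omega
  have hdisj : Disjoint (Icc 1 j) (Icc (j+1) (n+j)) := by
    rw [Finset.disjoint_left]
    intro a ha hb
    have := Finset.mem_Icc.mp ha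
    have := Finset.mem_Icc.mp hb
    omega
  rw [hsplit, Finset.sum_union hdisj, add_sub_cancel_left]
  apply Finset.sum_nbij' (fun t => t - j) (fun i => i + j)
  · intro a ha; have := Finset.mem_Icc.mp ha; apply Finset.mem_Icc.mpr; omega
  · intro a ha; have := Finset.mem_Icc.mp ha; apply Finset.mem_Icc.mpr; omega
  · intro a ha; have := Finset.mem_Icc.mp ha; omega
  · intro a ha; have := Finset.mem_Icc.mp ha; omega
  · intro a ha
    have h := Finset.mem_Icc.mp ha
    congr 1
    push_cast [Nat.cast_sub (by omega : j ≤ a)]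
    ring

lemma H_diff (n j : ℕ) : H (n+j) - H j = ∑ i ∈ Icc 1 n, 1/((i:ℚ)+j) := by
  have := sum_shift n j (fun x => 1/x)
  simpa [H] using this

lemma H2_diff (n j : ℕ) : H2 (n+j) - H2 j = ∑ i ∈ Icc 1 n, 1/((i:ℚ)+j)^2 := by
  have := sum_shift n j (fun x => 1/x^2)
  simpa [H2] using this

lemma expand_sq (s : Finset ℕ) (K : ℚ) (e f : ℕ → ℚ) :
    K * (2 * (∑ i ∈ s, e i)^2 - ∑ i ∈ s, f i)
      = (∑ i ∈ s, ∑ i' ∈ s, K * (2 * (e i * e i'))) - ∑ i ∈ s, K * f i := by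
  have h1 : ∑ i ∈ s, ∑ i' ∈ s, K * (2*(e i * e i')) = K * (2 * ∑ i ∈ s, ∑ i' ∈ s, e i * e i') := by
    simp only [Finset.mul_sum]
    try exact Finset.sum_congr rfl fun i _ => Finset.sum_congr rfl fun i' _ => by ring
  rw [h1, pow_two, Finset.sum_mul_sum, ← Finset.mul_sum]
  ring

theorem stmt_3 (n : ℕ) (hn : 0 < n) :
    (∑ j ∈ Icc 1 n, (-1 : ℚ) ^ j * (Nat.choose (n + j) j) * (Nat.choose n j) * (j : ℚ) ^ 2 *
        (2 * (H (n + j) - H j) ^ 2 - (H2 (n + j) - H2 j)))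
      + ∑ j ∈ Icc 1 n, (-1 : ℚ) ^ j / ((Nat.choose (n + j) j : ℚ) * (Nat.choose n j)) =
      (n : ℚ) * (2 * n - 1) * (-1 : ℚ) ^ n := by
  set T : ℕ → ℕ → ℕ → ℚ := fun j i i' =>
    (-1:ℚ)^j * (n.choose j) * (((n+j).choose j : ℚ) * (j:ℚ)^2 / (((i:ℚ)+j) * ((i':ℚ)+j)))
    with hT
  set B : ℚ := ∑ j ∈ Icc 1 n, (-1 : ℚ) ^ j / ((Nat.choose (n + j) j : ℚ) * (Nat.choose n j))
    with hB
  -- step 1: rewrite each summand of the first sum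
  have key1 : ∀ j ∈ Icc 1 n,
      (-1 : ℚ) ^ j * (Nat.choose (n + j) j) * (Nat.choose n j) * (j : ℚ) ^ 2 *
        (2 * (H (n + j) - H j) ^ 2 - (H2 (n + j) - H2 j))
      = (∑ i ∈ Icc 1 n, ∑ i' ∈ Icc 1 n, 2 * T j i i') - ∑ i ∈ Icc 1 n, T j i i := by
    intro j _
    have base : (-1 : ℚ) ^ j * (Nat.choose (n + j) j) * (Nat.choose n j) * (j : ℚ) ^ 2 *
        (2 * (H (n + j) - H j) ^ 2 - (H2 (n + j) - H2 j))
        = ((-1 : ℚ) ^ j * (Nat.choose (n + j) j) * (Nat.choose n j) * (j : ℚ) ^ 2) *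
          (2 * (∑ i ∈ Icc 1 n, 1/((i:ℚ)+j)) ^ 2 - ∑ i ∈ Icc 1 n, 1/((i:ℚ)+j)^2) := by
      rw [H_diff, H2_diff]
      try ring
    rw [base, expand_sq]
    congr 1
    · apply Finset.sum_congr rfl
      intro i hi
      apply Finset.sum_congr rfl
      intro i' hi'
      have h1 : ((i:ℚ)+j) ≠ 0 := by
        have : (1:ℚ) ≤ (i:ℚ) := by exact_mod_cast (Finset.mem_Icc.mp hi).1
        have : (0:ℚ) ≤ (j:ℚ) := Nat.cast_nonneg j
        positivity
      have h2 : ((i':ℚ)+j) ≠ 0 := by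
        have : (1:ℚ) ≤ (i':ℚ) := by exact_mod_cast (Finset.mem_Icc.mp hi').1
        have : (0:ℚ) ≤ (j:ℚ) := Nat.cast_nonneg j
        positivity
      rw [hT]
      field_simp
      try ring
    · apply Finset.sum_congr rfl
      intro i hi
      have h1 : ((i:ℚ)+j) ≠ 0 := by
        have : (1:ℚ) ≤ (i:ℚ) := by exact_mod_cast (Finset.mem_Icc.mp hi).1
        have : (0:ℚ) ≤ (j:ℚ) := Nat.cast_nonneg j
        positivity
      rw [hT]
      field_simp
      try ring
  rw [Finset.sum_congr rfl key1]
  -- step 2: extend the j-sum to range (n+1)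
  have key2 : ∑ j ∈ Icc 1 n, ((∑ i ∈ Icc 1 n, ∑ i' ∈ Icc 1 n, 2 * T j i i')
        - ∑ i ∈ Icc 1 n, T j i i)
      = ∑ j ∈ range (n+1), ((∑ i ∈ Icc 1 n, ∑ i' ∈ Icc 1 n, 2 * T j i i')
        - ∑ i ∈ Icc 1 n, T j i i) := by
    rw [Finset.range_eq_Ico, Finset.sum_eq_sum_Ico_succ_bot (Nat.succ_pos n)]
    rw [show Finset.Ico 1 (n+1) = Icc 1 n from Finset.Ico_add_one_right_eq_Icc 1 n]
    have hT0 : ∀ i i' : ℕ, T 0 i i' = 0 := by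
      intro i i'
      rw [hT]
      simp
    simp only [hT0, mul_zero, Finset.sum_const_zero, sub_zero, zero_add]
  rw [key2]
  -- step 3: swap sums
  have key3 : ∑ j ∈ range (n+1), ((∑ i ∈ Icc 1 n, ∑ i' ∈ Icc 1 n, 2 * T j i i')
        - ∑ i ∈ Icc 1 n, T j i i)
      = 2 * (∑ i ∈ Icc 1 n, ∑ i' ∈ Icc 1 n, ∑ j ∈ range (n+1), T j i i')
        - ∑ i ∈ Icc 1 n, ∑ j ∈ range (n+1), T j i i := by
    rw [Finset.sum_sub_distrib]
    congr 1
    · rw [Finset.mul_sum, Finset.sum_comm]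
      apply Finset.sum_congr rfl
      intro i _
      rw [Finset.mul_sum, Finset.sum_comm]
      apply Finset.sum_congr rfl
      intro i' _
      rw [Finset.mul_sum]
    · rw [Finset.sum_comm]
  rw [key3]
  -- step 4: evaluate inner sums
  have key4 : ∀ i ∈ Icc 1 n, ∑ i' ∈ Icc 1 n, ∑ j ∈ range (n+1), T j i i'
      = (n-1 : ℚ) * (-1:ℚ)^n + ((-1:ℚ)^n + (-1:ℚ)^(i-1) / (((n+i).choose i : ℚ) * (n.choose i))) := by
    intro i hi
    obtain ⟨hi1, hi2⟩ := Finset.mem_Icc.mp hi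
    rw [← Finset.sum_erase_add _ _ hi]
    congr 1
    · rw [Finset.sum_congr rfl (fun i' hi' => by
        obtain ⟨hne, hmem⟩ := Finset.mem_erase.mp hi'
        obtain ⟨h1, h2⟩ := Finset.mem_Icc.mp hmem
        exact U_offdiag n i i' hi1 hi2 h1 h2 (fun h => hne (h.symm)))]
      rw [Finset.sum_const, Finset.card_erase_of_mem hi, Nat.card_Icc]
      rw [show n + 1 - 1 - 1 = n - 1 from by omega]
      rw [nsmul_eq_mul]
      congr 1
      have : (1:ℕ) ≤ n := hn
      push_cast [Nat.cast_sub this]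
      ring
    · exact U_diag n i hi1 hi2
  rw [Finset.sum_congr rfl key4]
  -- step 5: evaluate the diagonal j-sums
  have key5 : ∀ i ∈ Icc 1 n, ∑ j ∈ range (n+1), T j i i
      = (-1:ℚ)^n + (-1:ℚ)^(i-1) / (((n+i).choose i : ℚ) * (n.choose i)) := by
    intro i hi
    obtain ⟨hi1, hi2⟩ := Finset.mem_Icc.mp hi
    exact U_diag n i hi1 hi2
  rw [Finset.sum_congr rfl key5]
  -- step 6: identify B
  have key6 : ∑ i ∈ Icc 1 n, (-1:ℚ)^(i-1) / (((n+i).choose i : ℚ) * (n.choose i)) = -B := by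
    rw [hB, ← Finset.sum_neg_distrib]
    apply Finset.sum_congr rfl
    intro i hi
    obtain ⟨hi1, _⟩ := Finset.mem_Icc.mp hi
    obtain ⟨m, rfl⟩ : ∃ m, i = m + 1 := ⟨i - 1, by omega⟩
    rw [show m + 1 - 1 = m from rfl, pow_succ]
    ring
  -- final arithmetic
  rw [Finset.sum_add_distrib, Finset.sum_add_distrib, key6, Finset.sum_const,
    Finset.sum_const, Nat.card_Icc, show n + 1 - 1 = n from rfl, nsmul_eq_mul, nsmul_eq_mul]
  ring
end

section
/- For every natural number n, ∑_{k=0}^{n} (-1)^k · C(n+k,k) · C(n,k) · k · H_k = (-1)^n · n(n+1) · (2H_n − 1), as an identity of rational numbers. -/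
set_option maxHeartbeats 1000000


open Finset

lemma H_succ (k : ℕ) : H (k + 1) = H k + 1 / ((k : ℚ) + 1) := by
  rw [H, H, Finset.sum_Icc_succ_top (Nat.succ_le_succ (Nat.zero_le k))]
  push_cast
  ring

lemma rel1 (n k : ℕ) :
    (((n + k + 1).choose (k + 1) : ℕ) : ℚ) =
      ((n : ℚ) + k + 1) * ((n + k).choose k) / ((k : ℚ) + 1) := by
  have hk : ((k : ℚ) + 1) ≠ 0 := by positivity
  rw [eq_div_iff hk]
  have h := Nat.add_one_mul_choose_eq (n + k) k
  have := congrArg (fun x : ℕ => (x : ℚ)) h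
  push_cast at this
  linarith

lemma rel2 (n k : ℕ) :
    (((n + 1).choose (k + 1) : ℕ) : ℚ) =
      ((n : ℚ) + 1 - k) * ((n + 1).choose k) / ((k : ℚ) + 1) := by
  have hk : ((k : ℚ) + 1) ≠ 0 := by positivity
  rw [eq_div_iff hk]
  have h := Nat.choose_succ_right_eq (n + 1) k
  rcases le_or_gt k (n + 1) with hle | hlt
  · have := congrArg (fun x : ℕ => (x : ℚ)) h
    push_cast [Nat.cast_sub hle] at this
    linarith
  · rw [Nat.choose_eq_zero_of_lt hlt, Nat.choose_eq_zero_of_lt (Nat.lt_succ_of_lt hlt)]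
    push_cast
    ring

lemma rel3 (n k : ℕ) :
    ((n.choose k : ℕ) : ℚ) = ((n : ℚ) + 1 - k) * ((n + 1).choose k) / ((n : ℚ) + 1) := by
  have hn : ((n : ℚ) + 1) ≠ 0 := by positivity
  have hk : ((k : ℚ) + 1) ≠ 0 := by positivity
  rw [eq_div_iff hn]
  have h := Nat.add_one_mul_choose_eq n k
  have h1 := congrArg (fun x : ℕ => (x : ℚ)) h
  push_cast at h1
  -- h1 : (n+1) * C(n,k) = C(n+1,k+1) * (k+1)
  have h2 := rel2 n k
  rw [eq_div_iff hk] at h2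
  nlinarith [h1, h2]

lemma rel4 (n k : ℕ) :
    (((n + 1 + k).choose k : ℕ) : ℚ) =
      ((n : ℚ) + k + 1) * ((n + k).choose k) / ((n : ℚ) + 1) := by
  have hn : ((n : ℚ) + 1) ≠ 0 := by positivity
  rw [eq_div_iff hn]
  have h1 : (n + 1 + k).choose k = (n + k + 1).choose (n + 1) := by
    have h := Nat.choose_symm (show n + 1 ≤ n + k + 1 by omega)
    rw [show n + k + 1 - (n + 1) = k by omega] at h
    rw [show n + 1 + k = n + k + 1 by omega]
    exact h
  have h2 : (n + k).choose k = (n + k).choose n := by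
    have h := Nat.choose_symm (show n ≤ n + k by omega)
    rw [show n + k - n = k by omega] at h
    exact h
  have h := Nat.add_one_mul_choose_eq (n + k) n
  -- (n+k+1) * C(n+k, n) = C(n+k+1, n+1) * (n+1)
  have h3 := congrArg (fun x : ℕ => (x : ℚ)) h
  push_cast at h3
  rw [h1, h2]
  push_cast
  linarith

/-- Certificate function for the main telescoping identity. -/
def G (n j : ℕ) : ℚ :=
  (-1) ^ j * ((n + j).choose j) * ((n + 1).choose j) *
    ((2 * (j : ℚ) ^ 2 - 2 * (j : ℚ) ^ 3) * H j + (2 * (j : ℚ) ^ 3 - 2 * (j : ℚ))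
      - 2 * n * (n + 2) * (j : ℚ) ^ 2 / ((n : ℚ) + 1)) / ((n : ℚ) + 1)

lemma key (n k : ℕ) :
    ((n : ℚ) + 2) * ((-1 : ℚ) ^ k * ((n + k).choose k) * (n.choose k) * k * H k)
      + (n : ℚ) * ((-1 : ℚ) ^ k * ((n + 1 + k).choose k) * ((n + 1).choose k) * k * H k)
      + 2 * n * (n + 2) * ((-1 : ℚ) ^ k * ((n + k).choose k) * (n.choose k))
      = G n (k + 1) - G n k := by
  have hk : ((k : ℚ) + 1) ≠ 0 := by positivity
  have hn : ((n : ℚ) + 1) ≠ 0 := by positivity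
  simp only [G]
  rw [show n + (k + 1) = n + k + 1 by omega]
  rw [H_succ, rel1 n k, rel2 n k, rel4 n k, rel3 n k]
  push_cast
  field_simp
  ring

/-- Certificate function for the auxiliary sum. -/
def W (n j : ℕ) : ℚ :=
  (-1) ^ j * ((n + j).choose j) * ((n + 1).choose j) * (-2 * (j : ℚ) ^ 2) / ((n : ℚ) + 1) ^ 2

lemma keyB (n k : ℕ) :
    (-1 : ℚ) ^ k * ((n + 1 + k).choose k) * ((n + 1).choose k)
      + (-1 : ℚ) ^ k * ((n + k).choose k) * (n.choose k)
      = W n (k + 1) - W n k := by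
  have hk : ((k : ℚ) + 1) ≠ 0 := by positivity
  have hn : ((n : ℚ) + 1) ≠ 0 := by positivity
  simp only [W]
  rw [show n + (k + 1) = n + k + 1 by omega]
  rw [rel1 n k, rel2 n k, rel4 n k, rel3 n k]
  push_cast
  field_simp
  ring

lemma sumf (n : ℕ) :
    ∑ k ∈ range (n + 1), (-1 : ℚ) ^ k * ((n + k).choose k) * (n.choose k) = (-1) ^ n := by
  induction n with
  | zero => simp
  | succ m ih =>
    have tel : ∑ k ∈ range (m + 2), (W m (k + 1) - W m k) = W m (m + 2) - W m 0 :=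
      Finset.sum_range_sub (W m) (m + 2)
    have hW0 : W m 0 = 0 := by simp [W]
    have hWtop : W m (m + 2) = 0 := by
      have : (m + 1).choose (m + 2) = 0 := Nat.choose_eq_zero_of_lt (by omega)
      simp [W, this]
    have hsum : ∑ k ∈ range (m + 2),
        ((-1 : ℚ) ^ k * ((m + 1 + k).choose k) * ((m + 1).choose k)
          + (-1 : ℚ) ^ k * ((m + k).choose k) * (m.choose k)) = 0 := by
      rw [Finset.sum_congr rfl (fun k _ => keyB m k), tel, hW0, hWtop]
      ring
    rw [Finset.sum_add_distrib] at hsum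
    have hext : ∑ k ∈ range (m + 2), (-1 : ℚ) ^ k * ((m + k).choose k) * (m.choose k)
        = (-1) ^ m := by
      rw [Finset.sum_range_succ, ih]
      have : m.choose (m + 1) = 0 := Nat.choose_eq_zero_of_lt (by omega)
      simp [this]
    rw [hext] at hsum
    have : ∑ k ∈ range (m + 2), (-1 : ℚ) ^ k * ((m + 1 + k).choose k) * ((m + 1).choose k)
        = -(-1) ^ m := by linarith
    rw [show m + 1 + 1 = m + 2 by omega, this, pow_succ]
    ring

theorem stmt_5 (n : ℕ) :
    ∑ k ∈ range (n + 1), (-1 : ℚ) ^ k * (Nat.choose (n + k) k) * (Nat.choose n k) * k * H k =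
      (-1 : ℚ) ^ n * (n * (n + 1)) * (2 * H n - 1) := by
  induction n with
  | zero => simp
  | succ m ih =>
    cases m with
    | zero =>
      simp [Finset.sum_range_succ, H]
      norm_num
    | succ p =>
      set n := p + 1 with hn_def
      -- ih : statement at n; goal : statement at n + 1
      have hn0 : (n : ℚ) ≠ 0 := by
        simp [hn_def]
        positivity
      have hn1 : ((n : ℚ) + 1) ≠ 0 := by positivity
      have tel : ∑ k ∈ range (n + 2), (G n (k + 1) - G n k) = G n (n + 2) - G n 0 :=
        Finset.sum_range_sub (G n) (n + 2)
      have hG0 : G n 0 = 0 := by simp [G]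
      have hGtop : G n (n + 2) = 0 := by
        have : (n + 1).choose (n + 2) = 0 := Nat.choose_eq_zero_of_lt (by omega)
        simp [G, this]
      have hsum : ∑ k ∈ range (n + 2),
          (((n : ℚ) + 2) * ((-1 : ℚ) ^ k * ((n + k).choose k) * (n.choose k) * k * H k)
            + (n : ℚ) * ((-1 : ℚ) ^ k * ((n + 1 + k).choose k) * ((n + 1).choose k) * k * H k)
            + 2 * n * (n + 2) * ((-1 : ℚ) ^ k * ((n + k).choose k) * (n.choose k))) = 0 := by
        rw [Finset.sum_congr rfl (fun k _ => key n k), tel, hG0, hGtop]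
        ring
      rw [Finset.sum_add_distrib, Finset.sum_add_distrib, ← Finset.mul_sum, ← Finset.mul_sum,
        ← Finset.mul_sum] at hsum
      have hfirst : ∑ k ∈ range (n + 2), (-1 : ℚ) ^ k * ((n + k).choose k) * (n.choose k) * k * H k
          = (-1 : ℚ) ^ n * (n * (n + 1)) * (2 * H n - 1) := by
        rw [Finset.sum_range_succ, ih]
        have : n.choose (n + 1) = 0 := Nat.choose_eq_zero_of_lt (by omega)
        rw [this]
        push_cast
        ring
      have hthird : ∑ k ∈ range (n + 2), (-1 : ℚ) ^ k * ((n + k).choose k) * (n.choose k)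
          = (-1) ^ n := by
        rw [Finset.sum_range_succ, sumf n]
        have : n.choose (n + 1) = 0 := Nat.choose_eq_zero_of_lt (by omega)
        simp [this]
      rw [hfirst, hthird] at hsum
      -- hsum : (n+2) * val + n * X + 2n(n+2)*(-1)^n = 0
      have hX : (n : ℚ) * (∑ k ∈ range (n + 2),
          (-1 : ℚ) ^ k * ((n + 1 + k).choose k) * ((n + 1).choose k) * k * H k)
          = -(((n : ℚ) + 2) * ((-1 : ℚ) ^ n * (n * (n + 1)) * (2 * H n - 1))
              + 2 * n * (n + 2) * (-1) ^ n) := by linarith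
      show ∑ k ∈ range (n + 1 + 1),
          (-1 : ℚ) ^ k * ((n + 1 + k).choose k) * ((n + 1).choose k) * k * H k
          = (-1 : ℚ) ^ (n + 1) * ((n + 1 : ℕ) * ((n + 1 : ℕ) + 1)) * (2 * H (n + 1) - 1)
      rw [show n + 1 + 1 = n + 2 by omega, H_succ n]
      apply mul_left_cancel₀ hn0
      rw [hX]
      push_cast
      field_simp
      ring
end

section
/- For every natural number n, ∑_{k=1}^{n} (-1)^k / (C(n+k,k) · C(n,k)) = n(2n−1)(-1)^n − [ (1+n)^2 (n^2 − 2n − 2) · (n!)^2 · (-1)^n / (2 · (2n+2)!) + (1/4) · n · (3n^3 + 6n^2 + 11n − 4) · (-1)^n − (1/2)(n^2 + n − 1) + (3/2) · n^2 (1+n)^2 (-1)^n · ∑_{i=1}^{n} (i!)^2/(2i+2)! + n^2 (1+n)^2 (-1)^n · ∑_{i=1}^{n} (-1)^i / i^2 ], as an identity of rational numbers. -/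
open Finset

noncomputable def tq (n k : ℕ) : ℚ :=
  (-1)^k * ((Nat.factorial k : ℚ))^2 * (Nat.factorial (n-k) : ℚ) / (Nat.factorial (n+k) : ℚ)

noncomputable def gq (n k : ℕ) : ℚ :=
  -2*((n:ℚ)+1) * (-1)^k * ((Nat.factorial k : ℚ))^2 * (Nat.factorial (n+1-k) : ℚ) /
    ((n:ℚ)^2 * (Nat.factorial (n+k) : ℚ))

lemma telescope (f : ℕ → ℚ) (n : ℕ) :
    ∑ k ∈ Icc 1 n, (f (k+1) - f k) = f (n+1) - f 1 := by
  induction n with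
  | zero => simp
  | succ m ih =>
    rw [Finset.sum_Icc_succ_top (by omega), ih]; ring

lemma cast_term (n k : ℕ) (hk : k ≤ n) :
    (-1:ℚ)^k / ((Nat.choose (n + k) k : ℚ) * (Nat.choose n k)) = tq n k := by
  have e1 := Nat.choose_mul_factorial_mul_factorial (show k ≤ n + k from Nat.le_add_left k n)
  have e2 := Nat.choose_mul_factorial_mul_factorial hk
  rw [Nat.add_sub_cancel] at e1
  have e1' : ((n+k).choose k : ℚ) * k.factorial * n.factorial = (n+k).factorial := by
    exact_mod_cast congrArg (Nat.cast : ℕ → ℚ) e1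
  have e2' : (n.choose k : ℚ) * k.factorial * (n-k).factorial = n.factorial := by
    exact_mod_cast congrArg (Nat.cast : ℕ → ℚ) e2
  have h1 : ((n+k).choose k : ℚ) ≠ 0 := by
    exact_mod_cast Nat.choose_pos (show k ≤ n + k from Nat.le_add_left k n) |>.ne'
  have h2 : (n.choose k : ℚ) ≠ 0 := by exact_mod_cast (Nat.choose_pos hk).ne'
  have hf : ∀ m : ℕ, (m.factorial : ℚ) ≠ 0 := fun m => by
    exact_mod_cast m.factorial_ne_zero
  rw [tq, div_eq_div_iff (by positivity) (hf _)]
  linear_combination (-(-1:ℚ)^k) * e1' + (-(-1:ℚ)^k * ((n+k).choose k : ℚ) * (k.factorial:ℚ)) * e2'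

lemma step_term (n k : ℕ) (hn : 1 ≤ n) (hk1 : 1 ≤ k) (hk : k ≤ n) :
    tq (n+1) k + ((n:ℚ)+2)^2/(n:ℚ)^2 * tq n k = gq n (k+1) - gq n k := by
  have hf : ∀ m : ℕ, (m.factorial : ℚ) ≠ 0 := fun m => by
    exact_mod_cast m.factorial_ne_zero
  have h1 : n + 1 - k = (n - k) + 1 := by omega
  have h2 : n + 1 + k = (n + k) + 1 := by omega
  have h3 : n + 1 - (k + 1) = n - k := by omega
  have h4 : n + (k + 1) = (n + k) + 1 := by omega
  have hcast : ((n - k : ℕ) : ℚ) = (n : ℚ) - k := by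
    exact Nat.cast_sub hk
  have hn0 : (n : ℚ) ≠ 0 := by exact_mod_cast Nat.one_le_iff_ne_zero.mp hn
  have hnk : ((n : ℚ) + k + 1) ≠ 0 := by positivity
  rw [tq, tq, gq, gq, h1, h2, h3, h4, Nat.factorial_succ, Nat.factorial_succ,
    Nat.factorial_succ (k)]
  push_cast [hcast]
  field_simp
  ring

lemma recurrence (n : ℕ) (hn : 1 ≤ n) :
    ∑ k ∈ Icc 1 (n+1), tq (n+1) k
      = -(((n:ℚ)+2)^2/(n:ℚ)^2) * ∑ k ∈ Icc 1 n, tq n k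
        + tq (n+1) (n+1) + gq n (n+1) - gq n 1 := by
  rw [Finset.sum_Icc_succ_top (by omega)]
  have hsum : ∑ k ∈ Icc 1 n, tq (n+1) k
      = ∑ k ∈ Icc 1 n, ((gq n (k+1) - gq n k) - ((n:ℚ)+2)^2/(n:ℚ)^2 * tq n k) := by
    apply Finset.sum_congr rfl
    intro k hk
    rw [Finset.mem_Icc] at hk
    have := step_term n k hn hk.1 hk.2
    linarith
  rw [hsum, Finset.sum_sub_distrib, telescope, ← Finset.mul_sum]
  ring

theorem stmt_9 (n : ℕ) :
    ∑ k ∈ Icc 1 n, (-1 : ℚ) ^ k / ((Nat.choose (n + k) k : ℚ) * (Nat.choose n k)) =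
      (n : ℚ) * (2 * n - 1) * (-1 : ℚ) ^ n -
        ((1 + (n : ℚ)) ^ 2 * ((n : ℚ) ^ 2 - 2 * n - 2) * (Nat.factorial n : ℚ) ^ 2 * (-1 : ℚ) ^ n /
            (2 * (Nat.factorial (2 * n + 2) : ℚ))
          + (1 / 4 : ℚ) * n * (3 * (n : ℚ) ^ 3 + 6 * (n : ℚ) ^ 2 + 11 * n - 4) * (-1 : ℚ) ^ n
          - (1 / 2 : ℚ) * ((n : ℚ) ^ 2 + n - 1)
          + (3 / 2 : ℚ) * (n : ℚ) ^ 2 * (1 + (n : ℚ)) ^ 2 * (-1 : ℚ) ^ n *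
              ∑ i ∈ Icc 1 n, (Nat.factorial i : ℚ) ^ 2 / (Nat.factorial (2 * i + 2) : ℚ)
          + (n : ℚ) ^ 2 * (1 + (n : ℚ)) ^ 2 * (-1 : ℚ) ^ n *
              ∑ i ∈ Icc 1 n, (-1 : ℚ) ^ i / (i : ℚ) ^ 2) := by
  induction n with
  | zero => norm_num [Nat.factorial]
  | succ m ih =>
    -- convert LHS to tq-sums
    have hconv : ∀ N : ℕ, ∑ k ∈ Icc 1 N, (-1 : ℚ) ^ k / ((Nat.choose (N + k) k : ℚ) * (Nat.choose N k)) = ∑ k ∈ Icc 1 N, tq N k := by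
      intro N
      apply Finset.sum_congr rfl
      intro k hk
      rw [Finset.mem_Icc] at hk
      exact cast_term N k hk.2
    rw [hconv]
    rcases Nat.eq_zero_or_pos m with hm | hm
    · subst hm
      norm_num [Finset.Icc_self, tq, Nat.factorial]
    · rw [recurrence m hm]
      have ihq : ∑ k ∈ Icc 1 m, tq m k =
        (m : ℚ) * (2 * m - 1) * (-1 : ℚ) ^ m -
        ((1 + (m : ℚ)) ^ 2 * ((m : ℚ) ^ 2 - 2 * m - 2) * (Nat.factorial m : ℚ) ^ 2 * (-1 : ℚ) ^ m /
            (2 * (Nat.factorial (2 * m + 2) : ℚ))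
          + (1 / 4 : ℚ) * m * (3 * (m : ℚ) ^ 3 + 6 * (m : ℚ) ^ 2 + 11 * m - 4) * (-1 : ℚ) ^ m
          - (1 / 2 : ℚ) * ((m : ℚ) ^ 2 + m - 1)
          + (3 / 2 : ℚ) * (m : ℚ) ^ 2 * (1 + (m : ℚ)) ^ 2 * (-1 : ℚ) ^ m *
              ∑ i ∈ Icc 1 m, (Nat.factorial i : ℚ) ^ 2 / (Nat.factorial (2 * i + 2) : ℚ)
          + (m : ℚ) ^ 2 * (1 + (m : ℚ)) ^ 2 * (-1 : ℚ) ^ m *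
              ∑ i ∈ Icc 1 m, (-1 : ℚ) ^ i / (i : ℚ) ^ 2) := by
        rw [← hconv]; exact ih
      rw [ihq]
      rw [Finset.sum_Icc_succ_top (show 1 ≤ m + 1 by omega)
        (f := fun i => (Nat.factorial i : ℚ) ^ 2 / (Nat.factorial (2 * i + 2) : ℚ)),
        Finset.sum_Icc_succ_top (show 1 ≤ m + 1 by omega)
        (f := fun i => (-1 : ℚ) ^ i / (i : ℚ) ^ 2)]
      -- normalize factorial arguments
      have a1 : m + 1 + (m + 1) = (2*m+1)+1 := by omega
      have a2 : m + (m+1) = 2*m+1 := by omega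
      have a3 : m + 1 - (m + 1) = 0 := by omega
      have a4 : m + 1 - 1 = m := by omega
      have a5 : 2*(m+1)+2 = ((2*m+2)+1)+1 := by omega
      have a6 : 2*m+2 = (2*m+1)+1 := by omega
      rw [tq, gq, gq, a1, a2, a3, a4, a5, a6]
      simp only [Nat.factorial_succ, Nat.factorial_zero, Nat.factorial_one, pow_succ]
      have hf : ∀ j : ℕ, ((Nat.factorial j : ℕ) : ℚ) ≠ 0 := fun j => by
        exact_mod_cast j.factorial_ne_zero
      have hm0 : (m : ℚ) ≠ 0 := by exact_mod_cast Nat.one_le_iff_ne_zero.mp hm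
      have hm1 : ((m : ℚ) + 1) ≠ 0 := by positivity
      push_cast
      rcases Nat.even_or_odd m with he | ho
      · rw [he.neg_one_pow]
        field_simp
        ring
      · rw [ho.neg_one_pow]
        field_simp
        ring
end
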